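/- arXiv:1004.4222 — 5 statements merged into one kernel-verified Lean document; each statement's English description precedes it below -/
import Mathlib

section
/- Let x ∈ R^n with support S of size k, and let h ∈ R^n satisfy ‖x + h‖₁ ≤ ‖x‖₁. Then ‖h‖₁ ≤ 2√k ‖h‖₂, i.e., s(h) ≤ 4k whenever h ≠ 0. -/
open Finset

theorem error_vector_l1_sparse {n k : ℕ} (x h : Fin n → ℝ)
    (hk : (Finset.univ.filter fun i => x i ≠ 0).card = k)
    (hmin : ∑ i, |x i + h i| ≤ ∑ i, |x i|) :
    ∑ i, |h i| ≤ 2 * Real.sqrt k * Real.sqrt (∑ i, (h i)^2) ∧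
      (h ≠ 0 → (∑ i, |h i|)^2 / (∑ i, (h i)^2) ≤ 4 * k) := by
  set S : Finset (Fin n) := Finset.univ.filter fun i => x i ≠ 0 with hS
  have hxSc : ∀ i ∈ Sᶜ, x i = 0 := by
    intro i hi
    simpa [hS] using hi
  -- split sums
  have hsplit : ∀ f : Fin n → ℝ, ∑ i, f i = ∑ i ∈ S, f i + ∑ i ∈ Sᶜ, f i := by
    intro f
    rw [← Finset.sum_add_sum_compl S f]
  have hA : ∑ i ∈ Sᶜ, |h i| ≤ ∑ i ∈ S, |h i| := by
    have h1 : ∑ i ∈ S, |x i + h i| + ∑ i ∈ Sᶜ, |h i| ≤ ∑ i ∈ S, |x i| := by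
      have e1 : ∑ i ∈ Sᶜ, |x i + h i| = ∑ i ∈ Sᶜ, |h i| :=
        Finset.sum_congr rfl fun i hi => by rw [hxSc i hi, zero_add]
      have e2 : ∑ i ∈ Sᶜ, |x i| = 0 :=
        Finset.sum_eq_zero fun i hi => by rw [hxSc i hi, abs_zero]
      have := hmin
      rw [hsplit (fun i => |x i + h i|), hsplit (fun i => |x i|), e1, e2, add_zero] at this
      exact this
    have h2 : ∑ i ∈ S, |x i| - ∑ i ∈ S, |x i + h i| ≤ ∑ i ∈ S, |h i| := by
      rw [← Finset.sum_sub_distrib]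
      refine Finset.sum_le_sum fun i _ => ?_
      have := abs_sub_abs_le_abs_sub (x i) (x i + h i)
      simpa [abs_sub_comm] using this
    linarith
  have hL1 : ∑ i, |h i| ≤ 2 * ∑ i ∈ S, |h i| := by
    rw [hsplit (fun i => |h i|)]; linarith
  have hCS : ∑ i ∈ S, |h i| ≤ Real.sqrt k * Real.sqrt (∑ i, (h i)^2) := by
    have h1 : (∑ i ∈ S, |h i|) ^ 2 ≤ (k : ℝ) * ∑ i ∈ S, (h i) ^ 2 := by
      have := sq_sum_le_card_mul_sum_sq (s := S) (f := fun i => |h i|)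
      simpa [hk, sq_abs] using this
    have h2 : (k : ℝ) * ∑ i ∈ S, (h i) ^ 2 ≤ (k : ℝ) * ∑ i, (h i) ^ 2 := by
      refine mul_le_mul_of_nonneg_left ?_ (Nat.cast_nonneg k)
      exact Finset.sum_le_sum_of_subset_of_nonneg (Finset.subset_univ S)
        (fun i _ _ => sq_nonneg _)
    have h3 : (∑ i ∈ S, |h i|) ^ 2 ≤ (k : ℝ) * ∑ i, (h i) ^ 2 := h1.trans h2
    calc ∑ i ∈ S, |h i| = Real.sqrt ((∑ i ∈ S, |h i|) ^ 2) := by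
            rw [Real.sqrt_sq (Finset.sum_nonneg fun i _ => abs_nonneg _)]
      _ ≤ Real.sqrt ((k : ℝ) * ∑ i, (h i) ^ 2) := Real.sqrt_le_sqrt h3
      _ = Real.sqrt k * Real.sqrt (∑ i, (h i)^2) := Real.sqrt_mul (Nat.cast_nonneg k) _
  have main : ∑ i, |h i| ≤ 2 * Real.sqrt k * Real.sqrt (∑ i, (h i)^2) := by
    calc ∑ i, |h i| ≤ 2 * ∑ i ∈ S, |h i| := hL1
      _ ≤ 2 * (Real.sqrt k * Real.sqrt (∑ i, (h i)^2)) := by linarith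
      _ = 2 * Real.sqrt k * Real.sqrt (∑ i, (h i)^2) := by ring
  refine ⟨main, fun hne => ?_⟩
  have hpos : 0 < ∑ i, (h i) ^ 2 := by
    rcases Function.ne_iff.mp hne with ⟨i, hi⟩
    refine Finset.sum_pos' (fun j _ => sq_nonneg _) ⟨i, Finset.mem_univ i, ?_⟩
    exact pow_pos (abs_pos.mpr hi) 2 |>.trans_le (le_of_eq (sq_abs _))
  rw [div_le_iff₀ hpos]
  have hnn : (0:ℝ) ≤ ∑ i, |h i| := Finset.sum_nonneg fun i _ => abs_nonneg _
  have := mul_self_le_mul_self hnn main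
  calc (∑ i, |h i|)^2 = (∑ i, |h i|) * (∑ i, |h i|) := sq _
    _ ≤ (2 * Real.sqrt k * Real.sqrt (∑ i, (h i)^2)) * (2 * Real.sqrt k * Real.sqrt (∑ i, (h i)^2)) := this
    _ = 4 * (Real.sqrt k * Real.sqrt k) * (Real.sqrt (∑ i, (h i)^2) * Real.sqrt (∑ i, (h i)^2)) := by ring
    _ = 4 * k * ∑ i, (h i)^2 := by
        rw [Real.mul_self_sqrt (Nat.cast_nonneg k),
            Real.mul_self_sqrt (le_of_lt hpos)]
end

section
/- Let x ∈ R^n with support S of size k, let κ ∈ (0,1), and suppose h ∈ R^n satisfies ‖x + h‖₁ ≤ κ‖h‖₁ + ‖x‖₁. Then ‖h_{S^c}‖₁ ≤ ((1+κ)/(1−κ))‖h_S‖₁ and consequently ‖h‖₁ ≤ (2/(1−κ))√k ‖h‖₂. -/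
open Finset

theorem lasso_cone_constraint {n k : ℕ} (x h : Fin n → ℝ) (κ : ℝ)
    (hκ : κ ∈ Set.Ioo (0:ℝ) 1)
    (hk : (Finset.univ.filter fun i => x i ≠ 0).card = k)
    (hmin : ∑ i, |x i + h i| ≤ κ * (∑ i, |h i|) + ∑ i, |x i|) :
    (∑ i ∈ (Finset.univ.filter fun i => x i ≠ 0)ᶜ, |h i| ≤
      (1 + κ) / (1 - κ) * ∑ i ∈ Finset.univ.filter (fun i => x i ≠ 0), |h i|) ∧
    ∑ i, |h i| ≤ 2 / (1 - κ) * Real.sqrt k * Real.sqrt (∑ i, (h i)^2) := by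
  obtain ⟨hκ0, hκ1⟩ := hκ
  set S := Finset.univ.filter fun i : Fin n => x i ≠ 0 with hSdef
  have hxc : ∀ i ∈ Sᶜ, x i = 0 := by
    intro i hi
    simp only [hSdef, Finset.mem_compl, Finset.mem_filter, Finset.mem_univ, true_and,
      not_not] at hi
    exact hi
  have hsplit : ∀ f : Fin n → ℝ, ∑ i, f i = ∑ i ∈ S, f i + ∑ i ∈ Sᶜ, f i := fun f =>
    (Finset.sum_add_sum_compl S f).symm
  set a := ∑ i ∈ S, |h i| with ha
  set b := ∑ i ∈ Sᶜ, |h i| with hb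
  have ha0 : 0 ≤ a := Finset.sum_nonneg fun i _ => abs_nonneg _
  have hb0 : 0 ≤ b := Finset.sum_nonneg fun i _ => abs_nonneg _
  have hκ1' : 0 < 1 - κ := by linarith
  have key : (1 - κ) * b ≤ (1 + κ) * a := by
    have e1 : ∑ i, |x i + h i| = ∑ i ∈ S, |x i + h i| + b := by
      rw [hsplit fun i => |x i + h i|]
      congr 1
      exact Finset.sum_congr rfl fun i hi => by rw [hxc i hi, zero_add]
    have e2 : ∑ i, |x i| = ∑ i ∈ S, |x i| := by
      rw [hsplit fun i => |x i|]
      have : ∑ i ∈ Sᶜ, |x i| = 0 :=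
        Finset.sum_eq_zero fun i hi => by rw [hxc i hi, abs_zero]
      linarith
    have e3 : ∑ i, |h i| = a + b := hsplit fun i => |h i|
    have e4 : ∑ i ∈ S, |x i| - a ≤ ∑ i ∈ S, |x i + h i| := by
      rw [← Finset.sum_sub_distrib]
      exact Finset.sum_le_sum fun i _ => by
        have := abs_sub_abs_le_abs_sub (x i) (-h i)
        simp only [abs_neg, sub_neg_eq_add] at this
        linarith
    rw [e1, e2, e3] at hmin
    nlinarith
  have part1 : b ≤ (1 + κ) / (1 - κ) * a := by
    rw [div_mul_eq_mul_div, le_div_iff₀ hκ1']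
    nlinarith
  refine ⟨part1, ?_⟩
  have hcs : a ≤ Real.sqrt k * Real.sqrt (∑ i, (h i)^2) := by
    have h2 : a ^ 2 ≤ (S.card : ℝ) * ∑ i ∈ S, |h i| ^ 2 :=
      sq_sum_le_card_mul_sum_sq
    have h4 : ∑ i ∈ S, |h i|^2 ≤ ∑ i, (h i)^2 := by
      have heq : ∑ i ∈ S, |h i|^2 = ∑ i ∈ S, (h i)^2 :=
        Finset.sum_congr rfl fun i _ => sq_abs _
      rw [heq]
      exact Finset.sum_le_sum_of_subset_of_nonneg (Finset.subset_univ S)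
        fun i _ _ => sq_nonneg _
    have h5 : a ^ 2 ≤ (k : ℝ) * ∑ i, (h i)^2 := by
      rw [← hk]
      calc a ^ 2 ≤ (S.card : ℝ) * ∑ i ∈ S, |h i| ^ 2 := h2
        _ ≤ (S.card : ℝ) * ∑ i, (h i)^2 :=
            mul_le_mul_of_nonneg_left h4 (Nat.cast_nonneg _)
    calc a = Real.sqrt (a ^ 2) := (Real.sqrt_sq ha0).symm
      _ ≤ Real.sqrt ((k : ℝ) * ∑ i, (h i)^2) := Real.sqrt_le_sqrt h5
      _ = Real.sqrt k * Real.sqrt (∑ i, (h i)^2) := Real.sqrt_mul (Nat.cast_nonneg _) _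
  have e3 : ∑ i, |h i| = a + b := hsplit fun i => |h i|
  have hsum : ∑ i, |h i| ≤ 2 / (1 - κ) * a := by
    rw [e3]
    calc a + b ≤ a + (1 + κ) / (1 - κ) * a := by linarith
      _ = 2 / (1 - κ) * a := by field_simp; ring
  calc ∑ i, |h i| ≤ 2 / (1 - κ) * a := hsum
    _ ≤ 2 / (1 - κ) * (Real.sqrt k * Real.sqrt (∑ i, (h i)^2)) := by
        apply mul_le_mul_of_nonneg_left hcs
        positivity
    _ = 2 / (1 - κ) * Real.sqrt k * Real.sqrt (∑ i, (h i)^2) := by ring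
end

section
/- (Basis Pursuit error bound) Let x ∈ R^n have support of size k, let y = Ax + w with ‖w‖₂ ≤ ε, and suppose x̂ satisfies ‖x̂‖₁ ≤ ‖x‖₁ and ‖y − Ax̂‖₂ ≤ ε. If ρ_{4k}(A) > 0, then ‖x̂ − x‖₂ ≤ 2ε/ρ_{4k}(A). -/
open Finset

noncomputable def l1norm {n : ℕ} (x : Fin n → ℝ) : ℝ := ∑ i, |x i|
noncomputable def l2norm {n : ℕ} (x : Fin n → ℝ) : ℝ := Real.sqrt (∑ i, (x i)^2)

noncomputable def cmsv {m n : ℕ} (A : Matrix (Fin m) (Fin n) ℝ) (s : ℝ) : ℝ :=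
  sInf {r | ∃ x : Fin n → ℝ, x ≠ 0 ∧ (l1norm x)^2 ≤ s * (l2norm x)^2 ∧
    r = l2norm (A.mulVec x) / l2norm x}

lemma l2norm_eq_norm {n : ℕ} (v : Fin n → ℝ) :
    l2norm v = ‖(WithLp.equiv 2 (Fin n → ℝ)).symm v‖ := by
  rw [EuclideanSpace.norm_eq]
  simp [l2norm, sq_abs]

lemma l2norm_nonneg {n : ℕ} (v : Fin n → ℝ) : 0 ≤ l2norm v := Real.sqrt_nonneg _

lemma l2norm_pos {n : ℕ} (v : Fin n → ℝ) (hv : v ≠ 0) : 0 < l2norm v := by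
  rw [l2norm_eq_norm]
  rw [norm_pos_iff]
  intro h
  apply hv
  have := congrArg (WithLp.equiv 2 (Fin n → ℝ)) h
  simpa using this

lemma l2norm_sub_le {n : ℕ} (a b : Fin n → ℝ) :
    l2norm (a - b) ≤ l2norm a + l2norm b := by
  rw [l2norm_eq_norm, l2norm_eq_norm, l2norm_eq_norm]
  exact norm_sub_le _ _

lemma l2norm_sq {n : ℕ} (v : Fin n → ℝ) : (l2norm v)^2 = ∑ i, (v i)^2 := by
  rw [l2norm, Real.sq_sqrt]
  positivity

theorem basis_pursuit_error_bound {m n k : ℕ} (A : Matrix (Fin m) (Fin n) ℝ)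
    (x xhat : Fin n → ℝ) (w : Fin m → ℝ) (y : Fin m → ℝ) (ε : ℝ)
    (hk : (Finset.univ.filter fun i => x i ≠ 0).card = k)
    (hy : y = A.mulVec x + w) (hw : l2norm w ≤ ε)
    (hfeas : l2norm (y - A.mulVec xhat) ≤ ε)
    (hmin : l1norm xhat ≤ l1norm x)
    (hρ : 0 < cmsv A (4 * k)) :
    l2norm (xhat - x) ≤ 2 * ε / cmsv A (4 * k) := by
  have hε : 0 ≤ ε := le_trans (l2norm_nonneg w) hw
  set h := xhat - x with hh
  by_cases hzero : h = 0
  · rw [hzero]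
    have : l2norm (0 : Fin n → ℝ) = 0 := by simp [l2norm]
    rw [this]
    positivity
  -- ‖Ah‖ ≤ 2ε
  have hAh : l2norm (A.mulVec h) ≤ 2 * ε := by
    have e1 : A.mulVec h = w - (y - A.mulVec xhat) := by
      rw [hh]
      have : A.mulVec (xhat - x) = A.mulVec xhat - A.mulVec x := by
        simp [Matrix.mulVec_sub]
      rw [this, hy]
      ext i
      simp [Pi.sub_apply, Pi.add_apply]
      ring
    rw [e1]
    calc l2norm (w - (y - A.mulVec xhat)) ≤ l2norm w + l2norm (y - A.mulVec xhat) :=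
          l2norm_sub_le _ _
      _ ≤ ε + ε := add_le_add hw hfeas
      _ = 2 * ε := by ring
  -- support bound
  set T := Finset.univ.filter (fun i => x i ≠ 0) with hT
  have hT1 : ∀ i ∈ Tᶜ, x i = 0 := by
    intro i hi
    simp [hT, Finset.mem_compl, Finset.mem_filter] at hi
    exact hi
  -- cone condition: ∑_{Tᶜ} |h| ≤ ∑_T |h|
  have hcone : ∑ i ∈ Tᶜ, |h i| ≤ ∑ i ∈ T, |h i| := by
    have hx1 : l1norm x = ∑ i ∈ T, |x i| := by
      rw [l1norm, ← Finset.sum_filter_add_sum_filter_not Finset.univ (fun i => x i ≠ 0)]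
      have : ∑ i ∈ Finset.univ.filter (fun i => ¬ x i ≠ 0), |x i| = 0 := by
        apply Finset.sum_eq_zero
        intro i hi
        simp at hi
        simp [hi]
      rw [← hT] at *
      simp only [this, add_zero]
    have hxhat1 : l1norm xhat = ∑ i ∈ T, |xhat i| + ∑ i ∈ Tᶜ, |h i| := by
      rw [l1norm, ← Finset.sum_add_sum_compl T]
      congr 1
      apply Finset.sum_congr rfl
      intro i hi
      have : x i = 0 := hT1 i hi
      simp [hh, Pi.sub_apply, this]
    have key : ∀ i ∈ T, |x i| - |h i| ≤ |xhat i| := by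
      intro i _
      have : xhat i = x i + h i := by simp [hh]
      rw [this]
      have h2 : |x i| ≤ |x i + h i| + |h i| := by
        have := abs_add_le (x i + h i) (-h i)
        simpa using this
      linarith
    have hsum : ∑ i ∈ T, (|x i| - |h i|) ≤ ∑ i ∈ T, |xhat i| :=
      Finset.sum_le_sum key
    rw [Finset.sum_sub_distrib] at hsum
    rw [hx1] at hmin
    rw [hxhat1] at hmin
    linarith
  -- Cauchy-Schwarz: (∑_T |h|)² ≤ k * ∑ h²
  have hcs : (∑ i ∈ T, |h i|)^2 ≤ (k : ℝ) * ∑ i, (h i)^2 := by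
    have hcs' : (∑ i ∈ T, |h i|)^2 ≤ (∑ i ∈ T, (1:ℝ)^2) * ∑ i ∈ T, (|h i|)^2 := by
      have := Finset.sum_mul_sq_le_sq_mul_sq T (fun _ => (1:ℝ)) (fun i => |h i|)
      simpa using this
    calc (∑ i ∈ T, |h i|)^2 ≤ (∑ i ∈ T, (1:ℝ)^2) * ∑ i ∈ T, (|h i|)^2 := hcs'
      _ = (k : ℝ) * ∑ i ∈ T, (h i)^2 := by
          rw [← hk]; simp [sq_abs]
      _ ≤ (k : ℝ) * ∑ i, (h i)^2 := by
          apply mul_le_mul_of_nonneg_left _ (Nat.cast_nonneg k)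
          apply Finset.sum_le_sum_of_subset_of_nonneg (Finset.subset_univ T)
          intro i _ _
          positivity
  -- l1 bound
  have hl1 : (l1norm h)^2 ≤ (4 * k) * (l2norm h)^2 := by
    have h1 : l1norm h ≤ 2 * ∑ i ∈ T, |h i| := by
      rw [l1norm, ← Finset.sum_add_sum_compl T]
      linarith
    have h0 : 0 ≤ l1norm h := by
      rw [l1norm]; positivity
    have h2 : (l1norm h)^2 ≤ (2 * ∑ i ∈ T, |h i|)^2 := by
      apply sq_le_sq' _ h1
      linarith
    rw [l2norm_sq]
    calc (l1norm h)^2 ≤ (2 * ∑ i ∈ T, |h i|)^2 := h2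
      _ = 4 * (∑ i ∈ T, |h i|)^2 := by ring
      _ ≤ 4 * ((k : ℝ) * ∑ i, (h i)^2) := by linarith
      _ = (4 * k) * ∑ i, (h i)^2 := by ring
  -- cmsv ≤ ratio
  have hmem : l2norm (A.mulVec h) / l2norm h ∈
      {r | ∃ z : Fin n → ℝ, z ≠ 0 ∧ (l1norm z)^2 ≤ (4 * (k:ℝ)) * (l2norm z)^2 ∧
        r = l2norm (A.mulVec z) / l2norm z} := ⟨h, hzero, hl1, rfl⟩
  have hbdd : BddBelow {r | ∃ z : Fin n → ℝ, z ≠ 0 ∧ (l1norm z)^2 ≤ (4 * (k:ℝ)) * (l2norm z)^2 ∧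
        r = l2norm (A.mulVec z) / l2norm z} := by
    refine ⟨0, ?_⟩
    rintro r ⟨z, hz, _, rfl⟩
    exact div_nonneg (l2norm_nonneg _) (l2norm_nonneg _)
  have hle : cmsv A (4 * k) ≤ l2norm (A.mulVec h) / l2norm h := csInf_le hbdd hmem
  have hpos : 0 < l2norm h := l2norm_pos h hzero
  rw [le_div_iff₀ hρ]
  calc l2norm h * cmsv A (4 * k) ≤ l2norm (A.mulVec h) := by
        have := mul_le_mul_of_nonneg_left hle (le_of_lt hpos)
        rwa [mul_div_cancel₀ _ (ne_of_gt hpos)] at this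
    _ ≤ 2 * ε := hAh
end

section
/- (Dantzig selector error bound) Let x ∈ R^n have support of size k, y = Ax + w with ‖Aᵀw‖_∞ ≤ λσ, and let x̂ satisfy ‖x̂‖₁ ≤ ‖x‖₁ and ‖Aᵀ(y − Ax̂)‖_∞ ≤ λσ. If ρ_{4k}(A) > 0, then ‖x̂ − x‖₂ ≤ 4√k λσ / ρ_{4k}(A)². -/
open Finset

noncomputable def linfnorm {n : ℕ} (x : Fin n → ℝ) : ℝ := ⨆ i, |x i|

set_option maxHeartbeats 1000000 in
theorem dantzig_selector_error_bound {m n k : ℕ} (A : Matrix (Fin m) (Fin n) ℝ)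
    (x xhat : Fin n → ℝ) (w : Fin m → ℝ) (y : Fin m → ℝ) (lamsig : ℝ)
    (hls : 0 < lamsig)
    (hk : (Finset.univ.filter fun i => x i ≠ 0).card = k)
    (hy : y = A.mulVec x + w)
    (hw : linfnorm (A.transpose.mulVec w) ≤ lamsig)
    (hfeas : linfnorm (A.transpose.mulVec (y - A.mulVec xhat)) ≤ lamsig)
    (hmin : l1norm xhat ≤ l1norm x)
    (hρ : 0 < cmsv A (4 * k)) :
    l2norm (xhat - x) ≤ 4 * Real.sqrt k * lamsig / (cmsv A (4 * k))^2 := by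
  have hρ2 : (0:ℝ) < (cmsv A (4 * k))^2 := pow_pos hρ 2
  set h : Fin n → ℝ := xhat - x with hhdef
  by_cases hz : h = 0
  · have h0 : l2norm h = 0 := by rw [hz]; simp [l2norm]
    rw [h0]
    have : (0:ℝ) ≤ Real.sqrt k := Real.sqrt_nonneg _
    positivity
  -- positivity of l2norm h
  have hT : (0:ℝ) < ∑ i, (h i)^2 := by
    obtain ⟨i, hi⟩ := Function.ne_iff.mp hz
    exact Finset.sum_pos' (fun j _ => sq_nonneg _)
      ⟨i, Finset.mem_univ i, by simpa [sq_abs] using pow_pos (abs_pos.mpr hi) 2⟩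
  set t := l2norm h with htdef
  have ht : 0 < t := Real.sqrt_pos.mpr hT
  have ht2 : t^2 = ∑ i, (h i)^2 := Real.sq_sqrt hT.le
  -- support set
  set S := Finset.univ.filter (fun i => x i ≠ 0) with hSdef
  have hxoff : ∀ i ∈ Sᶜ, x i = 0 := by
    intro i hi
    have := Finset.mem_compl.mp hi
    simp [hSdef, Finset.mem_filter] at this
    exact this
  -- cone condition
  have hsplit : ∀ f : Fin n → ℝ, ∑ i, f i = ∑ i ∈ S, f i + ∑ i ∈ Sᶜ, f i :=
    fun f => (Finset.sum_add_sum_compl S f).symm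
  have e1 : ∑ i ∈ Sᶜ, |xhat i| = ∑ i ∈ Sᶜ, |h i| := by
    refine Finset.sum_congr rfl fun i hi => ?_
    have hx0 : x i = 0 := hxoff i hi
    simp [hhdef, Pi.sub_apply, hx0]
  have e2 : ∑ i ∈ Sᶜ, |x i| = 0 :=
    Finset.sum_eq_zero fun i hi => by rw [hxoff i hi, abs_zero]
  have e3 : ∀ i, |x i| - |h i| ≤ |xhat i| := by
    intro i
    have h1 : |x i| - |xhat i| ≤ |x i - xhat i| := abs_sub_abs_le_abs_sub _ _
    have h2 : |x i - xhat i| = |h i| := by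
      rw [hhdef]; simp [Pi.sub_apply, abs_sub_comm]
    linarith [h1, h2.le]
  have e4 : ∑ i ∈ S, |x i| - ∑ i ∈ S, |h i| ≤ ∑ i ∈ S, |xhat i| := by
    rw [← Finset.sum_sub_distrib]
    exact Finset.sum_le_sum fun i _ => e3 i
  have cone : ∑ i ∈ Sᶜ, |h i| ≤ ∑ i ∈ S, |h i| := by
    have hx1 : l1norm x = ∑ i ∈ S, |x i| := by
      rw [l1norm, hsplit, e2, add_zero]
    have hxh : l1norm xhat = ∑ i ∈ S, |xhat i| + ∑ i ∈ Sᶜ, |h i| := by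
      rw [l1norm, hsplit, e1]
    linarith [hmin, e4, hx1.le, hxh.le]
  -- Cauchy-Schwarz on S
  have hcard : (S.card : ℝ) = k := by rw [hSdef, hk]
  have CS : (∑ i ∈ S, |h i|)^2 ≤ (k:ℝ) * ∑ i, (h i)^2 := by
    have h1 := Finset.sum_mul_sq_le_sq_mul_sq S (fun _ => (1:ℝ)) (fun i => |h i|)
    simp only [one_mul, one_pow, Finset.sum_const, nsmul_eq_mul, mul_one, sq_abs] at h1
    have h2 : ∑ i ∈ S, (h i)^2 ≤ ∑ i, (h i)^2 :=
      Finset.sum_le_sum_of_subset_of_nonneg (Finset.subset_univ S)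
        (fun i _ _ => sq_nonneg _)
    calc (∑ i ∈ S, |h i|)^2 ≤ (S.card : ℝ) * ∑ i ∈ S, (h i)^2 := h1
      _ ≤ (k:ℝ) * ∑ i, (h i)^2 := by
          rw [hcard]; exact mul_le_mul_of_nonneg_left h2 (Nat.cast_nonneg k)
  have hBnonneg : (0:ℝ) ≤ ∑ i ∈ S, |h i| := Finset.sum_nonneg fun i _ => abs_nonneg _
  have hBle : ∑ i ∈ S, |h i| ≤ Real.sqrt k * t := by
    have : ∑ i ∈ S, |h i| ≤ Real.sqrt ((k:ℝ) * ∑ i, (h i)^2) := by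
      rw [← Real.sqrt_sq hBnonneg]
      exact Real.sqrt_le_sqrt CS
    calc ∑ i ∈ S, |h i| ≤ Real.sqrt ((k:ℝ) * ∑ i, (h i)^2) := this
      _ = Real.sqrt k * t := by
          rw [Real.sqrt_mul (Nat.cast_nonneg k)]
          rfl
  have hl1 : l1norm h ≤ 2 * (Real.sqrt k * t) := by
    have : l1norm h = ∑ i ∈ S, |h i| + ∑ i ∈ Sᶜ, |h i| := hsplit _
    linarith [cone, hBle]
  have hl1nonneg : (0:ℝ) ≤ l1norm h := Finset.sum_nonneg fun i _ => abs_nonneg _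
  -- membership in the cmsv set
  have hsqk : (Real.sqrt k)^2 = (k:ℝ) := Real.sq_sqrt (Nat.cast_nonneg k)
  have hmemcone : (l1norm h)^2 ≤ (4 * k) * (l2norm h)^2 := by
    have := pow_le_pow_left₀ hl1nonneg hl1 2
    rw [mul_pow, mul_pow, hsqk] at this
    rw [← htdef]
    nlinarith [this]
  have hbdd : BddBelow {r | ∃ z : Fin n → ℝ, z ≠ 0 ∧ (l1norm z)^2 ≤ (4 * k) * (l2norm z)^2 ∧
      r = l2norm (A.mulVec z) / l2norm z} := by
    refine ⟨0, fun r hr => ?_⟩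
    obtain ⟨z, _, _, rfl⟩ := hr
    unfold l2norm
    positivity
  have hle : cmsv A (4 * k) ≤ l2norm (A.mulVec h) / t :=
    csInf_le hbdd ⟨h, hz, hmemcone, rfl⟩
  have hρt : cmsv A (4 * k) * t ≤ l2norm (A.mulVec h) := (le_div_iff₀ ht).mp hle
  -- quadratic form bound
  have hveq : A.transpose.mulVec (A.mulVec h) =
      A.transpose.mulVec w - A.transpose.mulVec (y - A.mulVec xhat) := by
    rw [← Matrix.mulVec_sub]
    congr 1
    funext j
    rw [hy, hhdef]
    simp [Matrix.mulVec_sub, Matrix.mulVec_add, Pi.sub_apply, Pi.add_apply]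
    ring
  have hvbound : ∀ i, |A.transpose.mulVec (A.mulVec h) i| ≤ 2 * lamsig := by
    intro i
    rw [hveq]
    have b1 : |A.transpose.mulVec w i| ≤ linfnorm (A.transpose.mulVec w) := by
      unfold linfnorm
      exact le_ciSup ((Set.finite_range fun j => |A.transpose.mulVec w j|).bddAbove) i
    have b2 : |A.transpose.mulVec (y - A.mulVec xhat) i| ≤
        linfnorm (A.transpose.mulVec (y - A.mulVec xhat)) := by
      unfold linfnorm
      exact le_ciSup ((Set.finite_range fun j => |A.transpose.mulVec (y - A.mulVec xhat) j|).bddAbove) i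
    calc |(A.transpose.mulVec w - A.transpose.mulVec (y - A.mulVec xhat)) i|
        ≤ |A.transpose.mulVec w i| + |A.transpose.mulVec (y - A.mulVec xhat) i| := by
          rw [Pi.sub_apply]; exact abs_sub _ _
      _ ≤ 2 * lamsig := by linarith [b1, b2, le_trans b1 hw, le_trans b2 hfeas]
  have hquad : ∑ j, (A.mulVec h j)^2 ≤ l1norm h * (2 * lamsig) := by
    have e : ∑ j, (A.mulVec h j)^2 = ∑ i, h i * A.transpose.mulVec (A.mulVec h) i := by
      have : dotProduct h (A.transpose.mulVec (A.mulVec h)) =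
          dotProduct (A.mulVec h) (A.mulVec h) := by
        rw [Matrix.dotProduct_mulVec, Matrix.vecMul_transpose]
      simp only [dotProduct] at this
      rw [show (∑ j, (A.mulVec h j)^2) = ∑ j, A.mulVec h j * A.mulVec h j from by
        simp [sq], ← this]
    rw [e, l1norm, Finset.sum_mul]
    refine Finset.sum_le_sum fun i _ => ?_
    calc h i * A.transpose.mulVec (A.mulVec h) i
        ≤ |h i * A.transpose.mulVec (A.mulVec h) i| := le_abs_self _
      _ = |h i| * |A.transpose.mulVec (A.mulVec h) i| := abs_mul _ _
      _ ≤ |h i| * (2 * lamsig) :=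
          mul_le_mul_of_nonneg_left (hvbound i) (abs_nonneg _)
  -- put it together
  have hAh2 : (l2norm (A.mulVec h))^2 = ∑ j, (A.mulVec h j)^2 :=
    Real.sq_sqrt (Finset.sum_nonneg fun j _ => sq_nonneg _)
  have hρtn : 0 ≤ cmsv A (4 * k) * t := mul_nonneg hρ.le ht.le
  have hsq : (cmsv A (4 * k) * t)^2 ≤ (l2norm (A.mulVec h))^2 :=
    pow_le_pow_left₀ hρtn hρt 2
  have hchain : (cmsv A (4 * k))^2 * t^2 ≤ 2 * (Real.sqrt k * t) * (2 * lamsig) := by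
    have h1 : l1norm h * (2 * lamsig) ≤ 2 * (Real.sqrt k * t) * (2 * lamsig) :=
      mul_le_mul_of_nonneg_right hl1 (by linarith)
    calc (cmsv A (4 * k))^2 * t^2 = (cmsv A (4 * k) * t)^2 := by ring
      _ ≤ (l2norm (A.mulVec h))^2 := hsq
      _ = ∑ j, (A.mulVec h j)^2 := hAh2
      _ ≤ l1norm h * (2 * lamsig) := hquad
      _ ≤ 2 * (Real.sqrt k * t) * (2 * lamsig) := h1
  rw [le_div_iff₀ hρ2]
  nlinarith [hchain, ht, Real.sqrt_nonneg (k:ℝ)]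
end

section
/- Let x̂ minimize (1/2)‖y − Az‖₂² + λσ‖z‖₁ where y = Ax + w and ‖Aᵀw‖_∞ ≤ κλσ with κ ∈ (0,1). Then ‖x̂‖₁ ≤ κ‖x̂ − x‖₁ + ‖x‖₁. -/
open Finset

lemma l2sq_eq {m : ℕ} (v : Fin m → ℝ) : (l2norm v)^2 = ∑ i, (v i)^2 :=
  Real.sq_sqrt (Finset.sum_nonneg fun i _ => sq_nonneg _)

lemma holder_aux {n : ℕ} (g u : Fin n → ℝ) :
    ∑ j, g j * u j ≤ linfnorm g * l1norm u := by
  calc ∑ j, g j * u j ≤ ∑ j, |g j * u j| :=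
        Finset.sum_le_sum fun j _ => le_abs_self _
    _ = ∑ j, |g j| * |u j| := by simp [abs_mul]
    _ ≤ ∑ j, linfnorm g * |u j| := Finset.sum_le_sum fun j _ => by
        have : |g j| ≤ linfnorm g :=
          le_ciSup (f := fun i => |g i|) (Set.Finite.bddAbove (Set.finite_range _)) j
        exact mul_le_mul_of_nonneg_right this (abs_nonneg _)
    _ = linfnorm g * l1norm u := by rw [l1norm, Finset.mul_sum]

theorem lasso_l1_bound {m n : ℕ} (A : Matrix (Fin m) (Fin n) ℝ)
    (x xhat : Fin n → ℝ) (w : Fin m → ℝ) (y : Fin m → ℝ) (lamsig κ : ℝ)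
    (hls : 0 < lamsig) (hκ : κ ∈ Set.Ioo (0:ℝ) 1)
    (hy : y = A.mulVec x + w)
    (hw : linfnorm (A.transpose.mulVec w) ≤ κ * lamsig)
    (hmin : ∀ z : Fin n → ℝ,
      (1/2) * (l2norm (y - A.mulVec xhat))^2 + lamsig * l1norm xhat ≤
      (1/2) * (l2norm (y - A.mulVec z))^2 + lamsig * l1norm z) :
    l1norm xhat ≤ κ * l1norm (xhat - x) + l1norm x := by
  set u : Fin n → ℝ := xhat - x with hu
  set v : Fin m → ℝ := A.mulVec u with hv
  have h1 : y - A.mulVec x = w := by rw [hy]; abel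
  have h2 : y - A.mulVec xhat = w - v := by
    rw [hv, hu, Matrix.mulVec_sub, hy]; abel
  have key := hmin x
  rw [h1, h2, l2sq_eq, l2sq_eq] at key
  simp only [Pi.sub_apply] at key
  have hexp : ∑ i, (w i - v i)^2
      = ∑ i, (w i)^2 - 2 * ∑ i, w i * v i + ∑ i, (v i)^2 := by
    simp only [sub_sq]
    rw [Finset.sum_add_distrib, Finset.sum_sub_distrib, Finset.mul_sum]
    ring_nf
  have hwv : ∑ i, w i * v i = ∑ j, (A.transpose.mulVec w) j * u j := by
    have : dotProduct w (A.mulVec u) = dotProduct (A.transpose.mulVec w) u := by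
      rw [Matrix.dotProduct_mulVec, Matrix.mulVec_transpose]
    simpa [dotProduct, hv] using this
  have hvsq : (0:ℝ) ≤ ∑ i, (v i)^2 := Finset.sum_nonneg fun i _ => sq_nonneg _
  have hl1u : (0:ℝ) ≤ l1norm u := Finset.sum_nonneg fun i _ => abs_nonneg _
  have hh : ∑ j, (A.transpose.mulVec w) j * u j ≤ κ * lamsig * l1norm u :=
    (holder_aux _ _).trans (mul_le_mul_of_nonneg_right hw hl1u)
  have hmain : lamsig * l1norm xhat ≤ lamsig * (κ * l1norm u + l1norm x) := by
    nlinarith [key, hexp, hwv, hh, hvsq]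
  have := (mul_le_mul_iff_right₀ hls).mp hmain
  linarith
end
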